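/- In the regular unit hexagon graph H (center plus six vertices of a unit hexagon), for every proper 4-coloring, any monochromatic triple of vertices (three distinct vertices of the same color) forms an equilateral triangle of side √3. -/

import Mathlib

/-- The vertices of the graph `H`: `hexPts 0` is the center `(0,0)` and
`hexPts (k+1)`, `k = 0,…,5`, are the vertices `(cos(kπ/3), sin(kπ/3))` of a
regular hexagon of side length 1. -/
noncomputable def hexPts (i : Fin 7) : EuclideanSpace ℝ (Fin 2) :=
  if i = 0 then (WithLp.equiv 2 (Fin 2 → ℝ)).symm ![0, 0]
  else (WithLp.equiv 2 (Fin 2 → ℝ)).symm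
    ![Real.cos ((i.val - 1 : ℕ) * (Real.pi / 3)), Real.sin ((i.val - 1 : ℕ) * (Real.pi / 3))]

noncomputable def pt (a b : ℝ) : EuclideanSpace ℝ (Fin 2) := (WithLp.equiv 2 (Fin 2 → ℝ)).symm ![a, b]

lemma h0 : hexPts 0 = pt 0 0 := by simp [hexPts, pt]
lemma h1 : hexPts 1 = pt 1 0 := by simp [hexPts, pt]
lemma h2 : hexPts 2 = pt (1/2) (Real.sqrt 3/2) := by
  simp [hexPts, pt, Real.cos_pi_div_three, Real.sin_pi_div_three]
lemma h3 : hexPts 3 = pt (-(1/2)) (Real.sqrt 3/2) := by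
  have e : (2:ℝ) * (Real.pi/3) = Real.pi - Real.pi/3 := by ring
  simp [hexPts, pt, show ((3:Fin 7).val - 1:ℕ) = 2 from rfl, e, Real.cos_pi_sub, Real.sin_pi_sub,
    Real.cos_pi_div_three, Real.sin_pi_div_three]
lemma h4 : hexPts 4 = pt (-1) 0 := by
  have e : (3:ℝ) * (Real.pi/3) = Real.pi := by ring
  simp [hexPts, pt, show ((4:Fin 7).val - 1:ℕ) = 3 from rfl, e]
lemma h5 : hexPts 5 = pt (-(1/2)) (-(Real.sqrt 3/2)) := by
  have e : (4:ℝ) * (Real.pi/3) = Real.pi/3 + Real.pi := by ring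
  simp [hexPts, pt, show ((5:Fin 7).val - 1:ℕ) = 4 from rfl, e, Real.cos_add_pi, Real.sin_add_pi,
    Real.cos_pi_div_three, Real.sin_pi_div_three]
lemma h6 : hexPts 6 = pt (1/2) (-(Real.sqrt 3/2)) := by
  have e : (5:ℝ) * (Real.pi/3) = 2*Real.pi - Real.pi/3 := by ring
  simp [hexPts, pt, show ((6:Fin 7).val - 1:ℕ) = 5 from rfl, e, Real.cos_two_pi_sub, Real.sin_two_pi_sub,
    Real.cos_pi_div_three, Real.sin_pi_div_three]

lemma dist_pt (a b a' b' : ℝ) : dist (pt a b) (pt a' b') = Real.sqrt ((a-a')^2 + (b-b')^2) := by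
  simp [pt, EuclideanSpace.dist_eq, Fin.sum_univ_two, Real.dist_eq, sq_abs, WithLp.equiv_symm_apply, PiLp.toLp_apply]

lemma s3sq : Real.sqrt 3 ^ 2 = 3 := Real.sq_sqrt (by norm_num)
lemma dist1 (a b a' b' : ℝ) (h : (a-a')^2 + (b-b')^2 = 1) : dist (pt a b) (pt a' b') = 1 := by
  rw [dist_pt, h, Real.sqrt_one]
lemma dist3 (a b a' b' : ℝ) (h : (a-a')^2 + (b-b')^2 = 3) : dist (pt a b) (pt a' b') = Real.sqrt 3 := by
  rw [dist_pt, h]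
lemma dist2 (a b a' b' : ℝ) (h : (a-a')^2 + (b-b')^2 = 4) : dist (pt a b) (pt a' b') = 2 := by
  rw [dist_pt, h, show (4:ℝ)=2^2 by norm_num, Real.sqrt_sq (by norm_num)]
@[simp] lemma d_0_1 : dist (hexPts 0) (hexPts 1) = 1 := by
  rw [h0, h1]; exact dist1 _ _ _ _ (by nlinarith [s3sq])
@[simp] lemma d_0_2 : dist (hexPts 0) (hexPts 2) = 1 := by
  rw [h0, h2]; exact dist1 _ _ _ _ (by nlinarith [s3sq])
@[simp] lemma d_0_3 : dist (hexPts 0) (hexPts 3) = 1 := by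
  rw [h0, h3]; exact dist1 _ _ _ _ (by nlinarith [s3sq])
@[simp] lemma d_0_4 : dist (hexPts 0) (hexPts 4) = 1 := by
  rw [h0, h4]; exact dist1 _ _ _ _ (by nlinarith [s3sq])
@[simp] lemma d_0_5 : dist (hexPts 0) (hexPts 5) = 1 := by
  rw [h0, h5]; exact dist1 _ _ _ _ (by nlinarith [s3sq])
@[simp] lemma d_0_6 : dist (hexPts 0) (hexPts 6) = 1 := by
  rw [h0, h6]; exact dist1 _ _ _ _ (by nlinarith [s3sq])
@[simp] lemma d_1_0 : dist (hexPts 1) (hexPts 0) = 1 := by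
  rw [h1, h0]; exact dist1 _ _ _ _ (by nlinarith [s3sq])
@[simp] lemma d_1_2 : dist (hexPts 1) (hexPts 2) = 1 := by
  rw [h1, h2]; exact dist1 _ _ _ _ (by nlinarith [s3sq])
@[simp] lemma d_1_3 : dist (hexPts 1) (hexPts 3) = Real.sqrt 3 := by
  rw [h1, h3]; exact dist3 _ _ _ _ (by nlinarith [s3sq])
@[simp] lemma d_1_4 : dist (hexPts 1) (hexPts 4) = 2 := by
  rw [h1, h4]; exact dist2 _ _ _ _ (by nlinarith [s3sq])
@[simp] lemma d_1_5 : dist (hexPts 1) (hexPts 5) = Real.sqrt 3 := by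
  rw [h1, h5]; exact dist3 _ _ _ _ (by nlinarith [s3sq])
@[simp] lemma d_1_6 : dist (hexPts 1) (hexPts 6) = 1 := by
  rw [h1, h6]; exact dist1 _ _ _ _ (by nlinarith [s3sq])
@[simp] lemma d_2_0 : dist (hexPts 2) (hexPts 0) = 1 := by
  rw [h2, h0]; exact dist1 _ _ _ _ (by nlinarith [s3sq])
@[simp] lemma d_2_1 : dist (hexPts 2) (hexPts 1) = 1 := by
  rw [h2, h1]; exact dist1 _ _ _ _ (by nlinarith [s3sq])
@[simp] lemma d_2_3 : dist (hexPts 2) (hexPts 3) = 1 := by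
  rw [h2, h3]; exact dist1 _ _ _ _ (by nlinarith [s3sq])
@[simp] lemma d_2_4 : dist (hexPts 2) (hexPts 4) = Real.sqrt 3 := by
  rw [h2, h4]; exact dist3 _ _ _ _ (by nlinarith [s3sq])
@[simp] lemma d_2_5 : dist (hexPts 2) (hexPts 5) = 2 := by
  rw [h2, h5]; exact dist2 _ _ _ _ (by nlinarith [s3sq])
@[simp] lemma d_2_6 : dist (hexPts 2) (hexPts 6) = Real.sqrt 3 := by
  rw [h2, h6]; exact dist3 _ _ _ _ (by nlinarith [s3sq])
@[simp] lemma d_3_0 : dist (hexPts 3) (hexPts 0) = 1 := by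
  rw [h3, h0]; exact dist1 _ _ _ _ (by nlinarith [s3sq])
@[simp] lemma d_3_1 : dist (hexPts 3) (hexPts 1) = Real.sqrt 3 := by
  rw [h3, h1]; exact dist3 _ _ _ _ (by nlinarith [s3sq])
@[simp] lemma d_3_2 : dist (hexPts 3) (hexPts 2) = 1 := by
  rw [h3, h2]; exact dist1 _ _ _ _ (by nlinarith [s3sq])
@[simp] lemma d_3_4 : dist (hexPts 3) (hexPts 4) = 1 := by
  rw [h3, h4]; exact dist1 _ _ _ _ (by nlinarith [s3sq])
@[simp] lemma d_3_5 : dist (hexPts 3) (hexPts 5) = Real.sqrt 3 := by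
  rw [h3, h5]; exact dist3 _ _ _ _ (by nlinarith [s3sq])
@[simp] lemma d_3_6 : dist (hexPts 3) (hexPts 6) = 2 := by
  rw [h3, h6]; exact dist2 _ _ _ _ (by nlinarith [s3sq])
@[simp] lemma d_4_0 : dist (hexPts 4) (hexPts 0) = 1 := by
  rw [h4, h0]; exact dist1 _ _ _ _ (by nlinarith [s3sq])
@[simp] lemma d_4_1 : dist (hexPts 4) (hexPts 1) = 2 := by
  rw [h4, h1]; exact dist2 _ _ _ _ (by nlinarith [s3sq])
@[simp] lemma d_4_2 : dist (hexPts 4) (hexPts 2) = Real.sqrt 3 := by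
  rw [h4, h2]; exact dist3 _ _ _ _ (by nlinarith [s3sq])
@[simp] lemma d_4_3 : dist (hexPts 4) (hexPts 3) = 1 := by
  rw [h4, h3]; exact dist1 _ _ _ _ (by nlinarith [s3sq])
@[simp] lemma d_4_5 : dist (hexPts 4) (hexPts 5) = 1 := by
  rw [h4, h5]; exact dist1 _ _ _ _ (by nlinarith [s3sq])
@[simp] lemma d_4_6 : dist (hexPts 4) (hexPts 6) = Real.sqrt 3 := by
  rw [h4, h6]; exact dist3 _ _ _ _ (by nlinarith [s3sq])
@[simp] lemma d_5_0 : dist (hexPts 5) (hexPts 0) = 1 := by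
  rw [h5, h0]; exact dist1 _ _ _ _ (by nlinarith [s3sq])
@[simp] lemma d_5_1 : dist (hexPts 5) (hexPts 1) = Real.sqrt 3 := by
  rw [h5, h1]; exact dist3 _ _ _ _ (by nlinarith [s3sq])
@[simp] lemma d_5_2 : dist (hexPts 5) (hexPts 2) = 2 := by
  rw [h5, h2]; exact dist2 _ _ _ _ (by nlinarith [s3sq])
@[simp] lemma d_5_3 : dist (hexPts 5) (hexPts 3) = Real.sqrt 3 := by
  rw [h5, h3]; exact dist3 _ _ _ _ (by nlinarith [s3sq])
@[simp] lemma d_5_4 : dist (hexPts 5) (hexPts 4) = 1 := by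
  rw [h5, h4]; exact dist1 _ _ _ _ (by nlinarith [s3sq])
@[simp] lemma d_5_6 : dist (hexPts 5) (hexPts 6) = 1 := by
  rw [h5, h6]; exact dist1 _ _ _ _ (by nlinarith [s3sq])
@[simp] lemma d_6_0 : dist (hexPts 6) (hexPts 0) = 1 := by
  rw [h6, h0]; exact dist1 _ _ _ _ (by nlinarith [s3sq])
@[simp] lemma d_6_1 : dist (hexPts 6) (hexPts 1) = 1 := by
  rw [h6, h1]; exact dist1 _ _ _ _ (by nlinarith [s3sq])
@[simp] lemma d_6_2 : dist (hexPts 6) (hexPts 2) = Real.sqrt 3 := by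
  rw [h6, h2]; exact dist3 _ _ _ _ (by nlinarith [s3sq])
@[simp] lemma d_6_3 : dist (hexPts 6) (hexPts 3) = 2 := by
  rw [h6, h3]; exact dist2 _ _ _ _ (by nlinarith [s3sq])
@[simp] lemma d_6_4 : dist (hexPts 6) (hexPts 4) = Real.sqrt 3 := by
  rw [h6, h4]; exact dist3 _ _ _ _ (by nlinarith [s3sq])
@[simp] lemma d_6_5 : dist (hexPts 6) (hexPts 5) = 1 := by
  rw [h6, h5]; exact dist1 _ _ _ _ (by nlinarith [s3sq])

@[simp] lemma F0 (h : 0 < 7) : (⟨0, h⟩ : Fin 7) = 0 := rfl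
@[simp] lemma F1 (h : 1 < 7) : (⟨1, h⟩ : Fin 7) = 1 := rfl
@[simp] lemma F2 (h : 2 < 7) : (⟨2, h⟩ : Fin 7) = 2 := rfl
@[simp] lemma F3 (h : 3 < 7) : (⟨3, h⟩ : Fin 7) = 3 := rfl
@[simp] lemma F4 (h : 4 < 7) : (⟨4, h⟩ : Fin 7) = 4 := rfl
@[simp] lemma F5 (h : 5 < 7) : (⟨5, h⟩ : Fin 7) = 5 := rfl
@[simp] lemma F6 (h : 6 < 7) : (⟨6, h⟩ : Fin 7) = 6 := rfl

/-- In the hexagon graph `H`, for every proper 4-coloring, any monochromatic triple of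
vertices (three distinct vertices of the same color) forms an equilateral triangle of
side √3. -/
theorem hexagon_monochromatic_triple_is_sqrt3_triangle
    (c : Fin 7 → Fin 4)
    (hc : ∀ i j : Fin 7, dist (hexPts i) (hexPts j) = 1 → c i ≠ c j)
    (i j k : Fin 7) (hij : i ≠ j) (hik : i ≠ k) (hjk : j ≠ k)
    (hcij : c i = c j) (hcjk : c j = c k) :
    dist (hexPts i) (hexPts j) = Real.sqrt 3 ∧
    dist (hexPts j) (hexPts k) = Real.sqrt 3 ∧
    dist (hexPts i) (hexPts k) = Real.sqrt 3 := by
  fin_cases i <;> fin_cases j <;> fin_cases k <;>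
  first
    | exact absurd rfl hij
    | exact absurd rfl hik
    | exact absurd rfl hjk
    | (refine (hc _ _ ?_ hcij).elim; simp; done)
    | (refine (hc _ _ ?_ hcjk).elim; simp; done)
    | (refine (hc _ _ ?_ (hcij.trans hcjk)).elim; simp; done)
    | (refine ⟨?_, ?_, ?_⟩ <;> simp)
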